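/- For every nonzero integer n and every s′ ∈ (0, 1), one has ∫₀¹ |e^{2πinθ} − 1|² · θ^{−(1+2s′)} dθ ≥ |n|^{2s′}, where |·| denotes the complex absolute value and e^{2πinθ} = exp(2πinθ) is the complex exponential. -/

import Mathlib

open MeasureTheory Real Set

lemma abs_exp_mul_I_sub_one_sq' (x : ℝ) :
    ‖Complex.exp ((x : ℂ) * Complex.I) - 1‖ ^ 2 = 2 - 2 * Real.cos x := by
  rw [Complex.sq_norm, Complex.normSq_apply, Complex.sub_re, Complex.sub_im,
    Complex.exp_ofReal_mul_I_re, Complex.exp_ofReal_mul_I_im, Complex.one_re, Complex.one_im]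
  nlinarith [Real.sin_sq_add_cos_sq x]

set_option maxHeartbeats 1000000 in
/-- Key integral inequality of Appendix C: for `n ≠ 0` and `s′ ∈ (0,1)`,
`∫₀¹ |e^{2πinθ} − 1|² θ^{−(1+2s′)} dθ ≥ |n|^{2s′}`. -/
theorem exp_circle_integral_lower_bound
    (n : ℤ) (hn : n ≠ 0) (s' : ℝ) (hs' : s' ∈ Set.Ioo (0 : ℝ) 1) :
    |(n : ℝ)| ^ (2 * s')
      ≤ ∫ θ in (0 : ℝ)..1,
          ‖Complex.exp (2 * (Real.pi : ℂ) * Complex.I * (n : ℂ) * (θ : ℂ)) - 1‖ ^ 2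
            * θ ^ (-(1 + 2 * s')) := by
  obtain ⟨hs0, hs1⟩ := hs'
  set M : ℝ := |(n : ℝ)| with hMdef
  have hM1 : (1 : ℝ) ≤ M := by
    have h : (1 : ℤ) ≤ |n| := Int.one_le_abs hn
    rw [hMdef, ← Int.cast_abs]
    exact_mod_cast h
  have hM0 : (0 : ℝ) < M := lt_of_lt_of_le one_pos hM1
  set a : ℝ := 1 / (2 * M) with hadef
  have ha0 : 0 < a := by positivity
  have ha1 : a ≤ 1 := by
    rw [hadef, div_le_one (by positivity)]; linarith
  set f : ℝ → ℝ := fun θ =>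
    ‖Complex.exp (2 * (Real.pi : ℂ) * Complex.I * (n : ℂ) * (θ : ℂ)) - 1‖ ^ 2
      * θ ^ (-(1 + 2 * s')) with hfdef
  have hfeq : ∀ θ : ℝ, f θ = (2 - 2 * Real.cos (2 * π * n * θ)) * θ ^ (-(1 + 2 * s')) := by
    intro θ
    rw [hfdef]
    dsimp only
    rw [show (2 * (Real.pi : ℂ) * Complex.I * (n : ℂ) * (θ : ℂ))
        = ((2 * π * n * θ : ℝ) : ℂ) * Complex.I by push_cast; ring,
      abs_exp_mul_I_sub_one_sq']
  have hmeas : Measurable f := by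
    apply Measurable.mul
    · apply Measurable.pow _ measurable_const
      exact continuous_norm.measurable.comp
        (((Complex.continuous_exp.comp (by continuity)).sub continuous_const).measurable)
    · measurability
  -- integrability of the dominating upper bound
  have hrint : IntegrableOn (fun θ : ℝ => θ ^ (1 - 2 * s')) (Ioc 0 1) :=
    (intervalIntegral.intervalIntegrable_rpow' (by linarith)).1
  have hpowmul : ∀ θ : ℝ, 0 < θ → θ ^ 2 * θ ^ (-(1 + 2 * s')) = θ ^ (1 - 2 * s') := by
    intro θ hθ
    rw [← Real.rpow_natCast θ 2, ← Real.rpow_add hθ]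
    congr 1
    push_cast
    ring
  have hfint : IntegrableOn f (Ioc 0 1) := by
    apply Integrable.mono (hrint.const_mul ((2 * π * M) ^ 2))
      hmeas.aestronglyMeasurable.restrict
    filter_upwards [ae_restrict_mem measurableSet_Ioc] with θ hθ
    have h1 : 0 < θ := hθ.1
    have hrp : (0 : ℝ) ≤ θ ^ (-(1 + 2 * s')) := Real.rpow_nonneg h1.le _
    have hcos1 : Real.cos (2 * π * n * θ) ≤ 1 := Real.cos_le_one _
    have hcos2 : 1 - (2 * π * n * θ) ^ 2 / 2 ≤ Real.cos (2 * π * n * θ) :=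
      Real.one_sub_sq_div_two_le_cos
    have hsq : (2 * π * (n : ℝ) * θ) ^ 2 = (2 * π * M) ^ 2 * θ ^ 2 := by
      rw [hMdef]
      rw [show (2 * π * |(n : ℝ)|) ^ 2 * θ ^ 2 = (2*π)^2 * |(n : ℝ)|^2 * θ^2 by ring, sq_abs]
      ring
    have h3 : 2 - 2 * Real.cos (2 * π * n * θ) ≤ (2 * π * M) ^ 2 * θ ^ 2 := by
      nlinarith
    rw [Real.norm_eq_abs, Real.norm_eq_abs, hfeq]
    rw [abs_of_nonneg (by nlinarith), abs_of_nonneg (by positivity)]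
    calc (2 - 2 * Real.cos (2 * π * n * θ)) * θ ^ (-(1 + 2 * s'))
        ≤ ((2 * π * M) ^ 2 * θ ^ 2) * θ ^ (-(1 + 2 * s')) :=
          mul_le_mul_of_nonneg_right h3 hrp
      _ = (2 * π * M) ^ 2 * θ ^ (1 - 2 * s') := by
          rw [mul_assoc, hpowmul θ h1]
  -- lower bound function
  set g : ℝ → ℝ := fun θ => 16 * M ^ 2 * θ ^ (1 - 2 * s') with hgdef
  have hgint : IntegrableOn g (Ioc 0 a) :=
    ((intervalIntegral.intervalIntegrable_rpow' (a := 0) (b := a)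
      (by linarith)).1.const_mul (16 * M ^ 2))
  have hsub : Ioc 0 a ⊆ Ioc 0 1 := Ioc_subset_Ioc_right ha1
  have hfnonneg : 0 ≤ᵐ[volume.restrict (Ioc 0 1)] f := by
    filter_upwards [ae_restrict_mem measurableSet_Ioc] with θ hθ
    exact mul_nonneg (sq_nonneg _) (Real.rpow_nonneg hθ.1.le _)
  have step1 : ∫ θ in Ioc 0 a, f θ ≤ ∫ θ in Ioc 0 1, f θ :=
    setIntegral_mono_set hfint hfnonneg (HasSubset.Subset.eventuallyLE hsub)
  have step2 : ∫ θ in Ioc 0 a, g θ ≤ ∫ θ in Ioc 0 a, f θ := by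
    apply setIntegral_mono_on hgint (hfint.mono_set hsub) measurableSet_Ioc
    intro θ hθ
    have h1 : 0 < θ := hθ.1
    have h2 : θ ≤ a := hθ.2
    have hMθ : M * θ ≤ 1 / 2 := by
      rw [hadef] at h2
      have := mul_le_mul_of_nonneg_left h2 hM0.le
      calc M * θ ≤ M * (1 / (2 * M)) := this
        _ = 1 / 2 := by field_simp
    have hx : Real.cos (2 * π * (n:ℝ) * θ) = Real.cos (2 * π * M * θ) := by
      rcases abs_choice ((n : ℝ)) with h | h
      · rw [hMdef, h]
      · rw [hMdef, h]
        rw [show 2 * π * -(n : ℝ) * θ = -(2 * π * n * θ) by ring, Real.cos_neg]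
    have hsin : 2 * M * θ ≤ Real.sin (π * M * θ) := by
      have hh := Real.mul_le_sin (x := π * M * θ) (by positivity)
        (by nlinarith [Real.pi_pos])
      calc 2 * M * θ = 2 / π * (π * M * θ) := by
            field_simp
        _ ≤ Real.sin (π * M * θ) := hh
    have hcos : 2 - 2 * Real.cos (2 * π * M * θ) = 4 * Real.sin (π * M * θ) ^ 2 := by
      have hdouble := Real.cos_two_mul (π * M * θ)
      rw [show 2 * π * M * θ = 2 * (π * M * θ) by ring, hdouble]
      nlinarith [Real.sin_sq_add_cos_sq (π * M * θ)]
    have hrp : (0 : ℝ) ≤ θ ^ (-(1 + 2 * s')) := Real.rpow_nonneg h1.le _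
    rw [hgdef, hfeq, hx, hcos]
    dsimp only
    calc 16 * M ^ 2 * θ ^ (1 - 2 * s')
        = (16 * M ^ 2 * θ ^ 2) * θ ^ (-(1 + 2 * s')) := by
          rw [← hpowmul θ h1]; ring
      _ ≤ 4 * Real.sin (π * M * θ) ^ 2 * θ ^ (-(1 + 2 * s')) := by
          apply mul_le_mul_of_nonneg_right _ hrp
          nlinarith [hsin, mul_nonneg (mul_nonneg (by norm_num : (0:ℝ) ≤ 2) hM0.le) h1.le]
  -- compute the g integral
  have hexp0 : (0 : ℝ) < 2 - 2 * s' := by linarith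
  have hcalc : ∫ θ in Ioc 0 a, g θ = 16 * M ^ 2 * (a ^ (2 - 2 * s') / (2 - 2 * s')) := by
    rw [← intervalIntegral.integral_of_le ha0.le]
    rw [hgdef]
    simp only
    rw [intervalIntegral.integral_const_mul, integral_rpow (Or.inl (by linarith))]
    rw [show (1:ℝ) - 2 * s' + 1 = 2 - 2 * s' from by ring,
      Real.zero_rpow (ne_of_gt hexp0), sub_zero]
  have hfinal : M ^ (2 * s') ≤ 16 * M ^ 2 * (a ^ (2 - 2 * s') / (2 - 2 * s')) := by
    have h2M : (0 : ℝ) < 2 * M := by positivity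
    have hP : (0 : ℝ) < (2 * M) ^ (2 - 2 * s') := Real.rpow_pos_of_pos h2M _
    have h4 : (2 : ℝ) ^ (2 : ℝ) = 4 := by
      calc (2:ℝ) ^ (2:ℝ) = (2:ℝ) ^ ((2:ℕ):ℝ) := by norm_num
        _ = (2:ℝ) ^ (2:ℕ) := Real.rpow_natCast 2 2
        _ = 4 := by norm_num
    have hb : (2 : ℝ) ^ (2 - 2 * s') ≤ 4 := by
      calc (2 : ℝ) ^ (2 - 2 * s') ≤ 2 ^ (2 : ℝ) :=
            Real.rpow_le_rpow_of_exponent_le one_le_two (by linarith)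
        _ = 4 := h4
    have hM2 : M ^ (2 * s') * (2 * M) ^ (2 - 2 * s') = 2 ^ (2 - 2 * s') * M ^ 2 := by
      rw [Real.mul_rpow (by norm_num) hM0.le, ← mul_assoc,
        mul_comm (M ^ (2 * s')) ((2:ℝ) ^ (2 - 2 * s')), mul_assoc, ← Real.rpow_add hM0]
      rw [show 2 * s' + (2 - 2 * s') = ((2 : ℕ) : ℝ) from by push_cast; ring,
        Real.rpow_natCast]
    have h8 : (2 : ℝ) ^ (2 - 2 * s') * (2 - 2 * s') ≤ 8 := by
      nlinarith [hb, Real.rpow_nonneg (by norm_num : (0:ℝ) ≤ 2) (2 - 2 * s')]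
    have key : M ^ (2 * s') * ((2 * M) ^ (2 - 2 * s') * (2 - 2 * s')) ≤ 16 * M ^ 2 := by
      have : M ^ (2 * s') * ((2 * M) ^ (2 - 2 * s') * (2 - 2 * s'))
          = (2 ^ (2 - 2 * s') * (2 - 2 * s')) * M ^ 2 := by
        rw [← mul_assoc, hM2]; ring
      rw [this]
      nlinarith [h8, sq_nonneg M, hM0]
    have hap : a ^ (2 - 2 * s') = ((2 * M) ^ (2 - 2 * s'))⁻¹ := by
      rw [hadef, one_div, Real.inv_rpow h2M.le]
    rw [hap, show 16 * M ^ 2 * (((2 * M) ^ (2 - 2 * s'))⁻¹ / (2 - 2 * s'))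
        = 16 * M ^ 2 / ((2 * M) ^ (2 - 2 * s') * (2 - 2 * s')) from by
          field_simp]
    rw [le_div_iff₀ (by positivity)]
    linarith [key]
  calc M ^ (2 * s') ≤ 16 * M ^ 2 * (a ^ (2 - 2 * s') / (2 - 2 * s')) := hfinal
    _ = ∫ θ in Ioc 0 a, g θ := hcalc.symm
    _ ≤ ∫ θ in Ioc 0 a, f θ := step2
    _ ≤ ∫ θ in Ioc 0 1, f θ := step1
    _ = ∫ θ in (0:ℝ)..1, f θ := (intervalIntegral.integral_of_le (by norm_num)).symm
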